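/- Let p be an odd prime and let ℓ be an integer with ℓ ≡ 1 (mod p) and ℓ ≠ 1, and let k ≥ 1 be the p-adic valuation of ℓ - 1. Then ℓ is a unit in the ring of p-adic integers ℤ_p, and the topological closure of the cyclic subgroup generated by ℓ in the unit group ℤ_pˣ is exactly the subgroup 1 + p^k ℤ_p = {u ∈ ℤ_pˣ : u ≡ 1 mod p^k}. (Hence for odd p, the type of a prime ℓ ≡ 1 mod p is determined by the largest power of p dividing ℓ - 1.) -/

import Mathlib

section Aux

variable {p : ℕ} [Fact p.Prime]

lemma padic_isEmbedding_val : Topology.IsEmbedding (Units.val : ℤ_[p]ˣ → ℤ_[p]) := by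
  apply Units.isEmbedding_val_mk' (f := Ring.inverse)
  · apply LipschitzOnWith.continuousOn (K := 1)
    intro a ha b hb
    rcases ha with ⟨ua, rfl⟩
    rcases hb with ⟨ub, rfl⟩
    rw [Ring.inverse_unit, Ring.inverse_unit]
    simp only [edist_dist, dist_eq_norm]
    have key : ((ua⁻¹ : ℤ_[p]ˣ) : ℤ_[p]) - ((ub⁻¹ : ℤ_[p]ˣ) : ℤ_[p])
        = ((ua⁻¹ : ℤ_[p]ˣ) : ℤ_[p]) * ((ub⁻¹ : ℤ_[p]ˣ) : ℤ_[p]) * ((ub : ℤ_[p]) - (ua : ℤ_[p])) := by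
      have h1 : ((ua⁻¹ : ℤ_[p]ˣ) : ℤ_[p]) * (ua : ℤ_[p]) = 1 := by
        rw [← Units.val_mul, inv_mul_cancel, Units.val_one]
      have h2 : ((ub⁻¹ : ℤ_[p]ˣ) : ℤ_[p]) * (ub : ℤ_[p]) = 1 := by
        rw [← Units.val_mul, inv_mul_cancel, Units.val_one]
      calc ((ua⁻¹ : ℤ_[p]ˣ) : ℤ_[p]) - ((ub⁻¹ : ℤ_[p]ˣ) : ℤ_[p])
          = ((ua⁻¹ : ℤ_[p]ˣ) : ℤ_[p]) * (((ub⁻¹ : ℤ_[p]ˣ) : ℤ_[p]) * (ub : ℤ_[p]))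
            - (((ua⁻¹ : ℤ_[p]ˣ) : ℤ_[p]) * (ua : ℤ_[p])) * ((ub⁻¹ : ℤ_[p]ˣ) : ℤ_[p]) := by
            rw [h1, h2]; ring
        _ = _ := by ring
    rw [key, norm_mul, norm_mul, PadicInt.norm_units, PadicInt.norm_units]
    rw [show ((ub : ℤ_[p]) - (ua : ℤ_[p])) = -((ua : ℤ_[p]) - (ub : ℤ_[p])) by ring, norm_neg]
    simp [ENNReal.ofReal]
  · exact fun u => Ring.inverse_unit u

lemma one_add_pow_decomp {R : Type*} [CommRing R] (z : R) (b : ℕ) :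
    ∃ w : R, (1 + z) ^ b = 1 + b * z + z ^ 2 * w := by
  induction b with
  | zero => exact ⟨0, by ring⟩
  | succ b ih =>
    obtain ⟨w, hw⟩ := ih
    exact ⟨w + b + z * w, by rw [pow_succ, hw]; push_cast; ring⟩

lemma exists_nat_mul_dvd (d e : ℤ_[p]) (he : IsUnit e) :
    ∃ b : ℕ, (p : ℤ_[p]) ∣ d + (b : ℤ_[p]) * e := by
  have hne : PadicInt.toZMod e ≠ 0 := (he.map (PadicInt.toZMod (p := p))).ne_zero
  refine ⟨(- PadicInt.toZMod d / PadicInt.toZMod e).val, ?_⟩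
  have h0 : PadicInt.toZMod (d + (((- PadicInt.toZMod d / PadicInt.toZMod e).val : ℕ) : ℤ_[p]) * e) = 0 := by
    rw [map_add, map_mul, map_natCast, ZMod.natCast_val, ZMod.cast_id, div_mul_cancel₀ _ hne]
    ring
  have hmem : _ ∈ RingHom.ker (PadicInt.toZMod (p := p)) := h0
  rw [PadicInt.ker_toZMod, PadicInt.maximalIdeal_eq_span_p, Ideal.mem_span_singleton] at hmem
  exact hmem

omit [Fact p.Prime] in
lemma lte_decomp (hp : Fact p.Prime) (hodd : Odd p) (ℓ : ℤ)
    (hℓ : ¬ (p:ℤ) ∣ ℓ) (k : ℕ) (hk1 : 1 ≤ k) (hdvd : (p:ℤ)^k ∣ ℓ - 1)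
    (hndvd : ¬ (p:ℤ)^(k+1) ∣ ℓ - 1) (j : ℕ) :
    ∃ c : ℤ, ℓ ^ (p ^ j) - 1 = (p:ℤ)^(k+j) * c ∧ ¬ (p:ℤ) ∣ c := by
  have hdvd1 : (p:ℤ) ∣ ℓ - 1 := dvd_trans (dvd_pow_self _ (by omega)) hdvd
  have hm := Int.emultiplicity_pow_sub_pow hp.out hodd (y := 1) (by simpa using hdvd1)
    (by simpa using hℓ) (p ^ j)
  rw [one_pow] at hm
  have h1 : emultiplicity ((p:ℤ)) (ℓ - 1) = (k : ℕ∞) :=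
    emultiplicity_eq_coe.2 ⟨hdvd, hndvd⟩
  have h2 : emultiplicity p (p ^ j) = (j : ℕ∞) :=
    emultiplicity_pow_self hp.out.ne_zero hp.out.prime.not_unit j
  rw [h1, h2] at hm
  have hm' : emultiplicity ((p:ℤ)) (ℓ ^ (p ^ j) - 1) = ((k + j : ℕ) : ℕ∞) := by
    rw [hm]; push_cast; rfl
  rw [emultiplicity_eq_coe] at hm'
  obtain ⟨⟨c, hc⟩, hnc⟩ := hm'
  refine ⟨c, hc, fun hdc => hnc ?_⟩
  rw [hc, pow_succ]
  exact mul_dvd_mul_left _ hdc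

lemma padic_approx (L : ℤ_[p]) (k : ℕ) (hk1 : 1 ≤ k) (hLu : IsUnit L)
    (hL : ∀ n, k ≤ n → ∃ c : ℤ_[p], IsUnit c ∧ L ^ (p ^ (n - k)) = 1 + (p:ℤ_[p])^n * c)
    (v : ℤ_[p]) (hv : (p:ℤ_[p])^k ∣ v - 1) (n : ℕ) :
    ∃ a : ℕ, (p:ℤ_[p])^n ∣ L ^ a - v := by
  induction n with
  | zero => exact ⟨0, by simp⟩
  | succ n ih =>
    by_cases hnk : n + 1 ≤ k
    · refine ⟨0, ?_⟩
      have : (p:ℤ_[p])^(n+1) ∣ v - 1 := dvd_trans (pow_dvd_pow _ hnk) hv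
      rw [pow_zero, show (1 : ℤ_[p]) - v = -(v - 1) by ring]
      exact this.neg_right
    · have hkn : k ≤ n := by omega
      have hn1 : 1 ≤ n := le_trans hk1 hkn
      obtain ⟨a, d, hd⟩ := ih
      obtain ⟨c, hcu, hLc⟩ := hL n hkn
      obtain ⟨b, e, he⟩ := exists_nat_mul_dvd d (L ^ a * c) ((hLu.pow a).mul hcu)
      obtain ⟨w, hw⟩ := one_add_pow_decomp ((p:ℤ_[p])^n * c) b
      refine ⟨a + p ^ (n - k) * b, e + (p:ℤ_[p])^(n-1) * (L ^ a * c ^ 2 * w), ?_⟩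
      have e2 : (p:ℤ_[p])^(n-1) * (p:ℤ_[p])^(n+1) = ((p:ℤ_[p])^n)^2 := by
        rw [← pow_add, ← pow_mul]; congr 1; omega
      rw [pow_add, pow_mul, hLc, hw]
      linear_combination hd + (p:ℤ_[p])^n * he - (L ^ a * c ^ 2 * w) * e2

end Aux

theorem closure_zpowers_eq_one_add_pow_smul (p : ℕ) [Fact p.Prime] (hodd : Odd p)
    (ℓ : ℤ) (hmod : ℓ ≡ 1 [ZMOD (p : ℤ)]) (hne : ℓ ≠ 1)
    (k : ℕ) (hk : k = padicValInt p (ℓ - 1)) (hk1 : 1 ≤ k) :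
    IsUnit ((ℓ : ℤ_[p])) ∧
      ∀ u : ℤ_[p]ˣ, (u : ℤ_[p]) = (ℓ : ℤ_[p]) →
        closure ((Subgroup.zpowers u : Subgroup ℤ_[p]ˣ) : Set ℤ_[p]ˣ) =
          {v : ℤ_[p]ˣ | ((p : ℤ_[p])) ^ k ∣ ((v : ℤ_[p]) - 1)} := by
  have hp := (Fact.out : p.Prime)
  -- basic integer facts
  have hd1 : (p:ℤ) ∣ ℓ - 1 := by
    have := hmod.dvd
    simpa [show -(1 - ℓ) = ℓ - 1 by ring] using this.neg_right
  have hℓnd : ¬ (p:ℤ) ∣ ℓ := by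
    intro h
    have : (p:ℤ) ∣ 1 := by
      have := dvd_sub h hd1
      simpa using this
    exact absurd (Int.le_of_dvd one_pos this) (by exact_mod_cast hp.one_lt.not_ge)
  have hℓ1 : ℓ - 1 ≠ 0 := sub_ne_zero.2 hne
  have hkdvd : (p:ℤ)^k ∣ ℓ - 1 := hk ▸ padicValInt_dvd _
  have hkndvd : ¬ (p:ℤ)^(k+1) ∣ ℓ - 1 := by
    rw [padicValInt_dvd_iff]
    rintro (h | h)
    · exact hℓ1 h
    · omega
  -- ℓ is a unit in ℤ_[p]
  have hLnorm : ‖(ℓ : ℤ_[p])‖ = 1 := by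
    refine le_antisymm (PadicInt.norm_le_one _) (not_lt.1 fun h => ?_)
    exact hℓnd ((PadicInt.norm_int_lt_one_iff_dvd ℓ).1 h)
  have hLu : IsUnit (ℓ : ℤ_[p]) := PadicInt.isUnit_iff.2 hLnorm
  refine ⟨hLu, fun u hu => ?_⟩
  set L : ℤ_[p] := (ℓ : ℤ_[p]) with hLdef
  -- key decomposition in ℤ_[p]
  have hL : ∀ n, k ≤ n → ∃ c : ℤ_[p], IsUnit c ∧ L ^ (p ^ (n - k)) = 1 + (p:ℤ_[p])^n * c := by
    intro n hn
    obtain ⟨c, hc, hnc⟩ := lte_decomp ‹_› hodd ℓ hℓnd k hk1 hkdvd hkndvd (n - k)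
    refine ⟨(c : ℤ_[p]), ?_, ?_⟩
    · refine PadicInt.isUnit_iff.2 (le_antisymm (PadicInt.norm_le_one _) (not_lt.1 fun h => ?_))
      exact hnc ((PadicInt.norm_int_lt_one_iff_dvd c).1 h)
    · have h' := hc
      rw [show k + (n - k) = n by omega] at h'
      have hcast : L ^ (p ^ (n - k)) - 1 = (p:ℤ_[p])^n * (c:ℤ_[p]) := by
        calc L ^ (p ^ (n - k)) - 1 = ((ℓ ^ (p ^ (n - k)) - 1 : ℤ) : ℤ_[p]) := by
              rw [hLdef]; push_cast; ring
          _ = (((p:ℤ)^n * c : ℤ) : ℤ_[p]) := by rw [h']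
          _ = (p:ℤ_[p])^n * (c:ℤ_[p]) := by push_cast; ring
      linear_combination hcast
  -- the subgroup 1 + p^k ℤ_p
  have hdvd_iff : ∀ x : ℤ_[p], (p:ℤ_[p])^k ∣ x ↔ ‖x‖ ≤ (p:ℝ) ^ (-(k:ℤ)) := by
    intro x
    rw [PadicInt.norm_le_pow_iff_mem_span_pow, Ideal.mem_span_singleton]
  let S : Subgroup ℤ_[p]ˣ :=
    { carrier := {v : ℤ_[p]ˣ | (p:ℤ_[p])^k ∣ ((v : ℤ_[p]) - 1)}
      one_mem' := by simp
      mul_mem' := by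
        intro a b ha hb
        have : ((a * b : ℤ_[p]ˣ) : ℤ_[p]) - 1
            = (a : ℤ_[p]) * ((b : ℤ_[p]) - 1) + ((a : ℤ_[p]) - 1) := by
          rw [Units.val_mul]; ring
        rw [Set.mem_setOf_eq, this]
        exact dvd_add (hb.mul_left _) ha
      inv_mem' := by
        intro a ha
        have : ((a⁻¹ : ℤ_[p]ˣ) : ℤ_[p]) - 1
            = -(((a⁻¹ : ℤ_[p]ˣ) : ℤ_[p]) * ((a : ℤ_[p]) - 1)) := by
          have h1 : ((a⁻¹ : ℤ_[p]ˣ) : ℤ_[p]) * (a : ℤ_[p]) = 1 := by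
            rw [← Units.val_mul, inv_mul_cancel, Units.val_one]
          calc ((a⁻¹ : ℤ_[p]ˣ) : ℤ_[p]) - 1
              = ((a⁻¹ : ℤ_[p]ˣ) : ℤ_[p]) - ((a⁻¹ : ℤ_[p]ˣ) : ℤ_[p]) * (a : ℤ_[p]) := by
                rw [h1]
            _ = _ := by ring
        rw [Set.mem_setOf_eq, this]
        exact (ha.mul_left _).neg_right }
  have hSclosed : IsClosed (S : Set ℤ_[p]ˣ) := by
    have : (S : Set ℤ_[p]ˣ)
        = (Units.val : ℤ_[p]ˣ → ℤ_[p]) ⁻¹' {x : ℤ_[p] | ‖x - 1‖ ≤ (p:ℝ) ^ (-(k:ℤ))} := by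
      ext v
      simp only [Set.mem_preimage, Set.mem_setOf_eq]
      exact hdvd_iff _
    rw [this]
    exact IsClosed.preimage padic_isEmbedding_val.continuous
      (isClosed_le ((continuous_id.sub continuous_const).norm) continuous_const)
  have huS : u ∈ S := by
    show (p:ℤ_[p])^k ∣ ((u : ℤ_[p]) - 1)
    rw [hu, show (L : ℤ_[p]) - 1 = ((ℓ - 1 : ℤ) : ℤ_[p]) from by rw [hLdef]; push_cast; ring]
    exact (PadicInt.pow_p_dvd_int_iff k (ℓ - 1)).2 hkdvd
  apply Set.Subset.antisymm
  · have hsub : ((Subgroup.zpowers u : Subgroup ℤ_[p]ˣ) : Set ℤ_[p]ˣ) ⊆ (S : Set ℤ_[p]ˣ) :=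
      Subgroup.zpowers_le.2 huS
    exact closure_minimal hsub hSclosed
  · intro v hv
    rw [padic_isEmbedding_val.toIsInducing.closure_eq_preimage_closure_image]
    show (v : ℤ_[p]) ∈ closure (Units.val '' ((Subgroup.zpowers u : Subgroup ℤ_[p]ˣ) : Set ℤ_[p]ˣ))
    rw [Metric.mem_closure_iff]
    intro ε hε
    obtain ⟨m, hm⟩ := PadicInt.exists_pow_neg_lt p hε
    obtain ⟨a, ha⟩ := padic_approx L k hk1 hLu hL (v : ℤ_[p]) hv m
    refine ⟨((u ^ a : ℤ_[p]ˣ) : ℤ_[p]), ⟨u ^ a, Subgroup.npow_mem_zpowers u a, rfl⟩, ?_⟩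
    · have hval : ((u ^ a : ℤ_[p]ˣ) : ℤ_[p]) = L ^ a := by
        rw [Units.val_pow_eq_pow_val, hu]
      rw [dist_eq_norm, hval]
      calc ‖(v : ℤ_[p]) - L ^ a‖ = ‖L ^ a - (v : ℤ_[p])‖ := by
            rw [show (v : ℤ_[p]) - L ^ a = -(L ^ a - (v:ℤ_[p])) by ring, norm_neg]
        _ ≤ (p:ℝ) ^ (-(m:ℤ)) := by
            rw [PadicInt.norm_le_pow_iff_mem_span_pow, Ideal.mem_span_singleton]
            exact ha
        _ < ε := hm
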